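/- Let SL(3,ℂ) × SL(3,ℂ) × SL(2,ℂ) act on V = ℂ³ ⊗ ℂ³ ⊗ ℂ² by the tensor product of standard representations. Identifying V with pairs (A,B) of 3×3 complex matrices (the two slices along the ℂ² factor), the polynomial given by the discriminant of the binary cubic f(x,y) = det(xA + yB) is a nonzero homogeneous invariant of degree 12 for this action. -/

import Mathlib

open Polynomial Matrix

/-- The binary cubic `f(x,y) = det(xA + yB)`, dehomogenized at `y = 1`. -/
noncomputable def detCubic (A B : Matrix (Fin 3) (Fin 3) ℂ) : Polynomial ℂ :=
  ((Polynomial.X : Polynomial ℂ) • A.map Polynomial.C + B.map Polynomial.C).det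

/-- The discriminant `b²c² - 4ac³ - 4b³d - 27a²d² + 18abcd` of a cubic polynomial
`ax³ + bx² + cx + d`. -/
noncomputable def discCubic (p : Polynomial ℂ) : ℂ :=
  p.coeff 2 ^ 2 * p.coeff 1 ^ 2 - 4 * p.coeff 3 * p.coeff 1 ^ 3 -
    4 * p.coeff 2 ^ 3 * p.coeff 0 - 27 * p.coeff 3 ^ 2 * p.coeff 0 ^ 2 +
    18 * p.coeff 3 * p.coeff 2 * p.coeff 1 * p.coeff 0

/-- The discriminant of the binary cubic `det(xA + yB)`. -/
noncomputable def discDet (A B : Matrix (Fin 3) (Fin 3) ℂ) : ℂ :=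
  discCubic (detCubic A B)

/-- The coefficient of `u²v` in `det (uA + vB)`. -/
def Ecoef {R : Type*} [CommRing R] (A B : Matrix (Fin 3) (Fin 3) R) : R :=
  A 0 0 * A 1 1 * B 2 2 - A 0 0 * A 1 2 * B 2 1 - A 0 0 * A 2 1 * B 1 2 +
  A 0 0 * A 2 2 * B 1 1 - A 0 1 * A 1 0 * B 2 2 + A 0 1 * A 1 2 * B 2 0 +
  A 0 1 * A 2 0 * B 1 2 - A 0 1 * A 2 2 * B 1 0 + A 0 2 * A 1 0 * B 2 1 -
  A 0 2 * A 1 1 * B 2 0 - A 0 2 * A 2 0 * B 1 1 + A 0 2 * A 2 1 * B 1 0 +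
  A 1 0 * A 2 1 * B 0 2 - A 1 0 * A 2 2 * B 0 1 - A 1 1 * A 2 0 * B 0 2 +
  A 1 1 * A 2 2 * B 0 0 + A 1 2 * A 2 0 * B 0 1 - A 1 2 * A 2 1 * B 0 0

lemma det_lin {R : Type*} [CommRing R] (u v : R) (A B : Matrix (Fin 3) (Fin 3) R) :
    (u • A + v • B).det =
      u ^ 3 * A.det + u ^ 2 * v * Ecoef A B + u * v ^ 2 * Ecoef B A + v ^ 3 * B.det := by
  simp only [Matrix.det_fin_three, Ecoef, Matrix.add_apply, Matrix.smul_apply, smul_eq_mul]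
  ring

lemma detCubic_eq (A B : Matrix (Fin 3) (Fin 3) ℂ) :
    detCubic A B = C A.det * X ^ 3 + C (Ecoef A B) * X ^ 2 + C (Ecoef B A) * X + C B.det := by
  unfold detCubic
  rw [show (X : ℂ[X]) • A.map C + B.map C = (X : ℂ[X]) • A.map C + (1 : ℂ[X]) • B.map C by
    rw [one_smul], det_lin]
  simp only [Ecoef, Matrix.det_fin_three, Matrix.map_apply, _root_.map_mul, _root_.map_add,
    _root_.map_sub, one_pow]
  ring

lemma coeff3 (A B : Matrix (Fin 3) (Fin 3) ℂ) : (detCubic A B).coeff 3 = A.det := by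
  simp [detCubic_eq, coeff_X_pow, coeff_C, coeff_X]

lemma coeff2 (A B : Matrix (Fin 3) (Fin 3) ℂ) : (detCubic A B).coeff 2 = Ecoef A B := by
  simp [detCubic_eq, coeff_X_pow, coeff_C, coeff_X]

lemma coeff1 (A B : Matrix (Fin 3) (Fin 3) ℂ) : (detCubic A B).coeff 1 = Ecoef B A := by
  simp [detCubic_eq, coeff_X_pow, coeff_C, coeff_X]

lemma coeff0 (A B : Matrix (Fin 3) (Fin 3) ℂ) : (detCubic A B).coeff 0 = B.det := by
  simp [detCubic_eq, coeff_X_pow, coeff_C, coeff_X]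

lemma Ecoef_smul (t : ℂ) (A B : Matrix (Fin 3) (Fin 3) ℂ) :
    Ecoef (t • A) (t • B) = t ^ 3 * Ecoef A B := by
  simp only [Ecoef, Matrix.smul_apply, smul_eq_mul]; ring

lemma Ecoef_expand (a b c d : ℂ) (A B : Matrix (Fin 3) (Fin 3) ℂ) :
    Ecoef (a • A + c • B) (b • A + d • B) =
      3 * a ^ 2 * b * A.det + (a ^ 2 * d + 2 * a * b * c) * Ecoef A B +
        (2 * a * c * d + b * c ^ 2) * Ecoef B A + 3 * c ^ 2 * d * B.det := by
  simp only [Ecoef, Matrix.det_fin_three, Matrix.add_apply, Matrix.smul_apply, smul_eq_mul]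
  ring

/-- On `V = ℂ³ ⊗ ℂ³ ⊗ ℂ²`, identified with pairs `(A,B)` of `3×3` complex matrices,
the discriminant of the binary cubic `det(xA+yB)` is a nonzero homogeneous degree-12
invariant for `SL(3,ℂ) × SL(3,ℂ) × SL(2,ℂ)` acting by `(g₁,g₂)·A = g₁Ag₂ᵀ` and by
linear substitution in `(x,y)`. -/
theorem stmt10 :
    (∀ (t : ℂ) (A B : Matrix (Fin 3) (Fin 3) ℂ),
      discDet (t • A) (t • B) = t ^ 12 * discDet A B) ∧
    (∀ (g₁ g₂ : Matrix.SpecialLinearGroup (Fin 3) ℂ) (A B : Matrix (Fin 3) (Fin 3) ℂ),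
      discDet (g₁.1 * A * g₂.1ᵀ) (g₁.1 * B * g₂.1ᵀ) = discDet A B) ∧
    (∀ (h : Matrix.SpecialLinearGroup (Fin 2) ℂ) (A B : Matrix (Fin 3) (Fin 3) ℂ),
      discDet (h.1 0 0 • A + h.1 1 0 • B) (h.1 0 1 • A + h.1 1 1 • B) = discDet A B) ∧
    (∃ A B : Matrix (Fin 3) (Fin 3) ℂ, discDet A B ≠ 0) := by
  refine ⟨?_, ?_, ?_, ?_⟩
  · intro t A B
    unfold discDet discCubic
    rw [coeff3, coeff2, coeff1, coeff0, coeff3, coeff2, coeff1, coeff0,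
      Matrix.det_smul, Matrix.det_smul, Ecoef_smul, Ecoef_smul]
    simp only [Fintype.card_fin, smul_eq_mul]
    ring
  · intro g₁ g₂ A B
    have key : detCubic (g₁.1 * A * g₂.1ᵀ) (g₁.1 * B * g₂.1ᵀ) = detCubic A B := by
      unfold detCubic
      have h1 : (X : ℂ[X]) • (g₁.1 * A * g₂.1ᵀ).map C + (g₁.1 * B * g₂.1ᵀ).map C =
          g₁.1.map C * ((X : ℂ[X]) • A.map C + B.map C) * (g₂.1ᵀ).map C := by
        rw [Matrix.map_mul, Matrix.map_mul, Matrix.map_mul, Matrix.map_mul,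
          Matrix.mul_add, Matrix.add_mul, Matrix.mul_smul, Matrix.smul_mul]
      have hg1 := RingHom.map_det (C : ℂ →+* ℂ[X]) g₁.1
      have hg2 := RingHom.map_det (C : ℂ →+* ℂ[X]) (g₂.1ᵀ)
      rw [g₁.2, _root_.map_one, RingHom.mapMatrix_apply] at hg1
      rw [Matrix.det_transpose, g₂.2, _root_.map_one, RingHom.mapMatrix_apply] at hg2
      rw [h1, Matrix.det_mul, Matrix.det_mul, ← hg1, ← hg2, one_mul, mul_one]
    unfold discDet
    rw [key]
  · intro h A B
    have hdet : h.1 0 0 * h.1 1 1 - h.1 0 1 * h.1 1 0 = 1 := by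
      have := h.2
      rwa [Matrix.det_fin_two] at this
    set a := h.1 0 0
    set b := h.1 0 1
    set c := h.1 1 0
    set d := h.1 1 1
    unfold discDet discCubic
    rw [coeff3, coeff2, coeff1, coeff0, coeff3, coeff2, coeff1, coeff0]
    rw [show (a • A + c • B).det = a ^ 3 * A.det + a ^ 2 * c * Ecoef A B +
        a * c ^ 2 * Ecoef B A + c ^ 3 * B.det from det_lin a c A B,
      show (b • A + d • B).det = b ^ 3 * A.det + b ^ 2 * d * Ecoef A B +
        b * d ^ 2 * Ecoef B A + d ^ 3 * B.det from det_lin b d A B,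
      Ecoef_expand a b c d A B, Ecoef_expand b a d c A B]
    set p := A.det
    set q := Ecoef A B
    set r := Ecoef B A
    set s := B.det
    linear_combination (((a*d-b*c)^5 + (a*d-b*c)^4 + (a*d-b*c)^3 + (a*d-b*c)^2 +
      (a*d-b*c) + 1) * (q^2*r^2 - 4*p*r^3 - 4*q^3*s - 27*p^2*s^2 + 18*p*q*r*s)) * hdet
  · refine ⟨!![1,0,0;0,1,0;0,0,1], !![0,0,0;0,1,0;0,0,2], ?_⟩
    unfold discDet discCubic
    rw [coeff3, coeff2, coeff1, coeff0]
    simp only [Ecoef, Matrix.det_fin_three, Matrix.of_apply, Matrix.cons_val', Matrix.cons_val_zero, Matrix.cons_val_one, Matrix.cons_val_two, Matrix.empty_val', Matrix.cons_val_fin_one, Matrix.head_cons, Matrix.tail_cons]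
    norm_num
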